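/- For every integer i ≥ 2, the identity ∑_{k=1}^{i−1} ( ∏_{j=0}^{k−1} (2 + 2/(i−j)) )^{−1} = 1 − 2/(i+1) holds over the reals. -/

import Mathlib

lemma prod_closed (i : ℕ) (hi : 2 ≤ i) : ∀ k : ℕ, k ≤ i - 1 →
    ∏ j ∈ Finset.range k, (2 + 2 / ((i : ℝ) - (j : ℝ)))
      = 2 ^ k * ((i : ℝ) + 1) / ((i : ℝ) + 1 - k) := by
  intro k
  induction k with
  | zero =>
    intro _
    simp only [Finset.range_zero, Finset.prod_empty, pow_zero, one_mul, Nat.cast_zero, sub_zero]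
    rw [div_self (by positivity : ((i:ℝ)+1) ≠ 0)]
  | succ k ih =>
    intro hk
    have hk' : k ≤ i - 1 := Nat.le_of_succ_le hk
    have hki : (k : ℝ) + 1 ≤ (i : ℝ) - 1 := by
      have : k + 1 ≤ i - 1 := hk
      have h2 : (((k + 1 : ℕ)) : ℝ) ≤ ((i - 1 : ℕ) : ℝ) := by exact_mod_cast this
      push_cast [Nat.cast_sub (by omega : 1 ≤ i)] at h2
      linarith
    have h1 : (i : ℝ) - k ≠ 0 := by linarith
    have h2 : (i : ℝ) + 1 - k ≠ 0 := by linarith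
    rw [Finset.prod_range_succ, ih hk']
    have : (2 : ℝ) + 2 / ((i : ℝ) - k) = 2 * ((i : ℝ) + 1 - k) / ((i : ℝ) - k) := by
      field_simp; ring
    rw [this]
    push_cast
    have h3 : (i : ℝ) + 1 - ((k : ℝ) + 1) ≠ 0 := by linarith
    field_simp
    ring

lemma geom_half (n : ℕ) : ∑ k ∈ Finset.Icc 1 n, ((1 : ℝ) / 2) ^ k = 1 - (1 / 2) ^ n := by
  induction n with
  | zero => simp
  | succ n ih =>
    rw [Finset.sum_Icc_succ_top (by omega), ih]
    ring

lemma sum_closed (n : ℕ) :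
    ∑ k ∈ Finset.Icc 1 n, ((n : ℝ) + 2 - k) / 2 ^ k = n := by
  induction n with
  | zero => simp
  | succ n ih =>
    rw [Finset.sum_Icc_succ_top (by omega)]
    have split : ∑ k ∈ Finset.Icc 1 n, (((n : ℕ) + 1 : ℝ) + 2 - k) / 2 ^ k
        = (∑ k ∈ Finset.Icc 1 n, ((n : ℝ) + 2 - k) / 2 ^ k)
          + ∑ k ∈ Finset.Icc 1 n, ((1 : ℝ) / 2) ^ k := by
      rw [← Finset.sum_add_distrib]
      apply Finset.sum_congr rfl
      intro k _
      rw [div_pow, one_pow]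
      field_simp
      ring
    push_cast at split ⊢
    rw [split, ih, geom_half]
    have : ((n : ℝ) + 1 + 2 - (n + 1)) / 2 ^ (n + 1) = (1 / 2) ^ n := by
      rw [div_pow, one_pow]
      field_simp
      ring
    rw [this]
    ring

/-- the identity
`∑_{k=1}^{i-1} (∏_{j=0}^{k-1} (2 + 2/(i-j)))⁻¹ = 1 - 2/(i+1)` for every `i ≥ 2`. -/
theorem P_i_identity (i : ℕ) (hi : 2 ≤ i) :
    ∑ k ∈ Finset.Icc 1 (i - 1),
        (∏ j ∈ Finset.range k, (2 + 2 / ((i : ℝ) - (j : ℝ))))⁻¹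
      = 1 - 2 / ((i : ℝ) + 1) := by
  have hi1 : ((i : ℝ)) + 1 ≠ 0 := by positivity
  have key : ∑ k ∈ Finset.Icc 1 (i - 1),
      (∏ j ∈ Finset.range k, (2 + 2 / ((i : ℝ) - (j : ℝ))))⁻¹
      = (∑ k ∈ Finset.Icc 1 (i - 1), (((i : ℝ) + 1 - k) / 2 ^ k)) / ((i : ℝ) + 1) := by
    rw [Finset.sum_div]
    apply Finset.sum_congr rfl
    intro k hk
    have hk' : k ≤ i - 1 := (Finset.mem_Icc.mp hk).2
    rw [prod_closed i hi k hk']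
    have hik : (k : ℝ) ≤ (i : ℝ) - 1 := by
      have : ((k : ℕ) : ℝ) ≤ ((i - 1 : ℕ) : ℝ) := by exact_mod_cast hk'
      rwa [Nat.cast_sub (by omega : 1 ≤ i), Nat.cast_one] at this
    have h2 : (i : ℝ) + 1 - k ≠ 0 := by linarith
    have h3 : (2 : ℝ) ^ k ≠ 0 := by positivity
    field_simp
  rw [key]
  have hcast : ((i - 1 : ℕ) : ℝ) = (i : ℝ) - 1 := by
    rw [Nat.cast_sub (by omega : 1 ≤ i), Nat.cast_one]
  have hs := sum_closed (i - 1)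
  rw [hcast] at hs
  have heq : ∑ k ∈ Finset.Icc 1 (i - 1), (((i : ℝ) + 1 - k) / 2 ^ k)
      = ∑ k ∈ Finset.Icc 1 (i - 1), (((i : ℝ) - 1) + 2 - k) / 2 ^ k := by
    apply Finset.sum_congr rfl; intro k _; ring_nf
  rw [heq, hs]
  field_simp
  ring
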